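/- Let A_0, A_1, A_2 be real symmetric n×n matrices with μ_0, μ_1, μ_2 ≥ 0, μ_0 + μ_1 + μ_2 = 1, μ_0 > 0, and μ_0 A_0 + μ_1 A_1 + μ_2 A_2 ⪰ 0. Then Property IR fails for A_0, A_1, A_2, i.e., there do not exist μ̆_1, μ̆_2, μ̆_3 > 0 and x̆_1, x̆_2 ∈ ℝ^n with Z̆ := A_0 + μ̆_1 A_1 + μ̆_2 A_2 + μ̆_3 I ⪰ 0, span{x̆_1, x̆_2} = Null(Z̆), x̆_1^T A_1 x̆_1 = x̆_2^T A_1 x̆_2 = 0 ≠ x̆_1^T A_1 x̆_2, and x̆_1^T A_2 x̆_1 < 0 < x̆_2^T A_2 x̆_2. -/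

import Mathlib

open Matrix

theorem stmt_18 (n : ℕ) (A₀ A₁ A₂ : Matrix (Fin n) (Fin n) ℝ)
    (hA₀ : A₀.IsSymm) (hA₁ : A₁.IsSymm) (hA₂ : A₂.IsSymm)
    (μ₀ μ₁ μ₂ : ℝ) (hμ₀ : 0 < μ₀) (hμ₁ : 0 ≤ μ₁) (hμ₂ : 0 ≤ μ₂)
    (hsum : μ₀ + μ₁ + μ₂ = 1)
    (hpsd : (μ₀ • A₀ + μ₁ • A₁ + μ₂ • A₂).PosSemidef) :
    ¬ ∃ (ν₁ ν₂ ν₃ : ℝ) (x₁ x₂ : Fin n → ℝ),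
      0 < ν₁ ∧ 0 < ν₂ ∧ 0 < ν₃ ∧
      (A₀ + ν₁ • A₁ + ν₂ • A₂ + ν₃ • (1 : Matrix (Fin n) (Fin n) ℝ)).PosSemidef ∧
      Submodule.span ℝ {x₁, x₂} =
        LinearMap.ker (A₀ + ν₁ • A₁ + ν₂ • A₂ + ν₃ • (1 : Matrix (Fin n) (Fin n) ℝ)).mulVecLin ∧
      x₁ ⬝ᵥ A₁.mulVec x₁ = 0 ∧ x₂ ⬝ᵥ A₁.mulVec x₂ = 0 ∧
      x₁ ⬝ᵥ A₁.mulVec x₂ ≠ 0 ∧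
      x₁ ⬝ᵥ A₂.mulVec x₁ < 0 ∧ 0 < x₂ ⬝ᵥ A₂.mulVec x₂ := by
  rintro ⟨ν₁, ν₂, ν₃, x₁, x₂, hν₁, hν₂, hν₃, hZ, hker, h11, h22, hcross, ha, hb⟩
  set Z := A₀ + ν₁ • A₁ + ν₂ • A₂ + ν₃ • (1 : Matrix (Fin n) (Fin n) ℝ) with hZdef
  -- x₁ and x₂ are in the kernel of Z
  have hx1mem : x₁ ∈ Submodule.span ℝ ({x₁, x₂} : Set (Fin n → ℝ)) :=
    Submodule.subset_span (Set.mem_insert _ _)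
  have hx2mem : x₂ ∈ Submodule.span ℝ ({x₁, x₂} : Set (Fin n → ℝ)) :=
    Submodule.subset_span (Set.mem_insert_of_mem _ rfl)
  rw [hker, LinearMap.mem_ker] at hx1mem hx2mem
  have hZx1 : Z.mulVec x₁ = 0 := hx1mem
  have hZx2 : Z.mulVec x₂ = 0 := hx2mem
  -- x₁, x₂ are nonzero
  have hx1ne : x₁ ≠ 0 := by
    rintro rfl; exact hcross (zero_dotProduct _)
  have hx2ne : x₂ ≠ 0 := by
    rintro rfl; apply hcross; simp
  have hs1 : 0 < x₁ ⬝ᵥ x₁ := by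
    rcases lt_or_eq_of_le (Finset.sum_nonneg fun i _ => mul_self_nonneg (x₁ i)) with h | h
    · exact h
    · exact absurd (dotProduct_self_eq_zero.mp h.symm) hx1ne
  have hs2 : 0 < x₂ ⬝ᵥ x₂ := by
    rcases lt_or_eq_of_le (Finset.sum_nonneg fun i _ => mul_self_nonneg (x₂ i)) with h | h
    · exact h
    · exact absurd (dotProduct_self_eq_zero.mp h.symm) hx2ne
  -- quadratic forms of Z vanish
  have hq1 : x₁ ⬝ᵥ Z.mulVec x₁ = 0 := by rw [hZx1, dotProduct_zero]
  have hq2 : x₂ ⬝ᵥ Z.mulVec x₂ = 0 := by rw [hZx2, dotProduct_zero]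
  have hexp1 : x₁ ⬝ᵥ A₀.mulVec x₁ + ν₂ * (x₁ ⬝ᵥ A₂.mulVec x₁) + ν₃ * (x₁ ⬝ᵥ x₁) = 0 := by
    have := hq1
    simp only [hZdef, add_mulVec, smul_mulVec, one_mulVec, dotProduct_add,
      dotProduct_smul, smul_eq_mul, h11] at this
    linarith
  have hexp2 : x₂ ⬝ᵥ A₀.mulVec x₂ + ν₂ * (x₂ ⬝ᵥ A₂.mulVec x₂) + ν₃ * (x₂ ⬝ᵥ x₂) = 0 := by
    have := hq2
    simp only [hZdef, add_mulVec, smul_mulVec, one_mulVec, dotProduct_add,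
      dotProduct_smul, smul_eq_mul, h22] at this
    linarith
  -- PSD of the convex combination
  have hM1 := hpsd.dotProduct_mulVec_nonneg x₁
  have hM2 := hpsd.dotProduct_mulVec_nonneg x₂
  simp only [add_mulVec, smul_mulVec, dotProduct_add, dotProduct_smul, smul_eq_mul,
    star_trivial, h11, h22, mul_zero, add_zero] at hM1 hM2
  have h1 := mul_nonneg (le_of_lt hb) hM1
  have h2 := mul_nonneg (le_of_lt (neg_pos.mpr ha)) hM2
  have e1 : μ₀ * (x₂ ⬝ᵥ A₂.mulVec x₂) *
      (x₁ ⬝ᵥ A₀.mulVec x₁ + ν₂ * (x₁ ⬝ᵥ A₂.mulVec x₁) + ν₃ * (x₁ ⬝ᵥ x₁)) = 0 := by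
    rw [hexp1]; ring
  have e2 : μ₀ * (-(x₁ ⬝ᵥ A₂.mulVec x₁)) *
      (x₂ ⬝ᵥ A₀.mulVec x₂ + ν₂ * (x₂ ⬝ᵥ A₂.mulVec x₂) + ν₃ * (x₂ ⬝ᵥ x₂)) = 0 := by
    rw [hexp2]; ring
  have t1 : 0 < μ₀ * ν₃ * ((x₁ ⬝ᵥ x₁) * (x₂ ⬝ᵥ A₂.mulVec x₂)) :=
    mul_pos (mul_pos hμ₀ hν₃) (mul_pos hs1 hb)
  have t2 : 0 < μ₀ * ν₃ * ((x₂ ⬝ᵥ x₂) * (-(x₁ ⬝ᵥ A₂.mulVec x₁))) :=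
    mul_pos (mul_pos hμ₀ hν₃) (mul_pos hs2 (neg_pos.mpr ha))
  nlinarith [h1, h2, e1, e2, t1, t2]
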